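/- arXiv:1606.01382 — 2 statements merged into one kernel-verified Lean document; each statement's English description precedes it below -/
import Mathlib

section
/- (Theorem 1, convergent case p = 2) Let σ > 0, let k be an even nonnegative integer, and let ε > 0 satisfy 2εσ² < 1. Then the series Σ_{n=0}^{∞} ((−ε)^n / n!) (2n+k−1)!! σ^{2n+k} converges and equals ∫_ℝ p_G(x) x^k exp(−ε x²) dx, which in turn equals (k−1)!! σ^k (1 + 2εσ²)^{−(k+1)/2}. -/
open MeasureTheory Real

lemma myint {b : ℝ} (hb : 0 < b) (n : ℕ) :
    Integrable fun x : ℝ => x ^ n * Real.exp (-b * x ^ 2) := by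
  have hcont : Continuous fun x : ℝ => x ^ n * Real.exp (-b * x ^ 2) := by
    continuity
  refine Integrable.mono'
    ((integrable_exp_neg_mul_sq (half_pos hb)).const_mul
      ((n.factorial : ℝ) * Real.exp (1 / (2 * b))))
    hcont.aestronglyMeasurable (ae_of_all _ fun x => ?_)
  rw [Real.norm_eq_abs, abs_mul, abs_of_nonneg (Real.exp_pos _).le, abs_pow]
  have h1 : |x| ^ n ≤ (n.factorial : ℝ) * Real.exp |x| := by
    have := Real.pow_div_factorial_le_exp _ (abs_nonneg x) n
    rw [div_le_iff₀ (by positivity : (0:ℝ) < (n.factorial:ℝ))] at this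
    linarith [this]
  have h2 : |x| ≤ b / 2 * x ^ 2 + 1 / (2 * b) := by
    have key : 2 * b * |x| ≤ b * (b * x ^ 2) + 1 := by
      rcases abs_cases x with ⟨h',_⟩ | ⟨h',_⟩ <;> rw [h'] <;>
        nlinarith [sq_nonneg (b * x - 1), sq_nonneg (b * x + 1)]
    calc |x| = (2 * b * |x|) / (2 * b) := by field_simp
      _ ≤ (b * (b * x ^ 2) + 1) / (2 * b) := by gcongr
      _ = b / 2 * x ^ 2 + 1 / (2 * b) := by field_simp
  calc |x| ^ n * Real.exp (-b * x ^ 2)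
      ≤ (n.factorial : ℝ) * Real.exp |x| * Real.exp (-b * x ^ 2) := by
        apply mul_le_mul_of_nonneg_right h1 (Real.exp_pos _).le
    _ ≤ (n.factorial : ℝ) * Real.exp (1 / (2 * b)) * Real.exp (-(b / 2) * x ^ 2) := by
        rw [mul_assoc, mul_assoc, ← Real.exp_add, ← Real.exp_add]
        apply mul_le_mul_of_nonneg_left _ (by positivity)
        apply Real.exp_le_exp.2
        nlinarith [h2]

lemma mytend_top {b : ℝ} (hb : 0 < b) (n : ℕ) :
    Filter.Tendsto (fun x : ℝ => x ^ n * Real.exp (-b * x ^ 2)) Filter.atTop (nhds 0) := by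
  have he : Filter.Tendsto (fun x : ℝ => Real.exp (-(1/2) * x)) Filter.atTop (nhds 0) := by
    rw [Real.tendsto_exp_comp_nhds_zero]
    have := Filter.tendsto_neg_atTop_atBot.comp
      ((Filter.tendsto_id (α := ℝ)).const_mul_atTop (by norm_num : (0:ℝ) < 1/2))
    apply this.congr
    intro x
    simp [neg_mul]
  have h1 := (rpow_mul_exp_neg_mul_sq_isLittleO_exp_neg hb (n : ℝ)).isBigO.trans_tendsto he
  apply h1.congr'
  filter_upwards [Filter.eventually_gt_atTop (0:ℝ)] with x hx
  rw [Real.rpow_natCast]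

lemma mytend_bot {b : ℝ} (hb : 0 < b) (n : ℕ) :
    Filter.Tendsto (fun x : ℝ => x ^ n * Real.exp (-b * x ^ 2)) Filter.atBot (nhds 0) := by
  have h1 : Filter.Tendsto (fun x : ℝ => (-x) ^ n * Real.exp (-b * (-x) ^ 2))
      Filter.atBot (nhds 0) := (mytend_top hb n).comp Filter.tendsto_neg_atBot_atTop
  have h2 := h1.const_mul ((-1 : ℝ) ^ n)
  rw [mul_zero] at h2
  apply h2.congr
  intro x
  rw [neg_sq]
  ring_nf
  rw [pow_mul', neg_one_sq, one_pow, mul_one]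

lemma dfac_step (m : ℕ) :
    ((2 * m + 1).doubleFactorial : ℝ) = (2 * m + 1) * ((2 * m - 1).doubleFactorial : ℝ) := by
  cases m with
  | zero => simp [Nat.doubleFactorial]
  | succ m =>
      have h1 : 2 * (m + 1) + 1 = (2 * m + 1) + 2 := by ring
      have h2 : 2 * (m + 1) - 1 = 2 * m + 1 := by omega
      rw [h1, h2, Nat.doubleFactorial_add_two]
      push_cast
      ring

lemma mymoment {b : ℝ} (hb : 0 < b) (m : ℕ) :
    ∫ x : ℝ, x ^ (2 * m) * Real.exp (-b * x ^ 2) =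
      Real.sqrt (π / b) * ((2 * m - 1).doubleFactorial : ℝ) / (2 * b) ^ m := by
  induction m with
  | zero => simpa using integral_gaussian b
  | succ m ih =>
      have hderiv : ∀ x : ℝ, HasDerivAt (fun x : ℝ => x ^ (2 * m + 1) * Real.exp (-b * x ^ 2))
          (((2 * m + 1 : ℝ)) * (x ^ (2 * m) * Real.exp (-b * x ^ 2))
            - (2 * b) * (x ^ (2 * m + 2) * Real.exp (-b * x ^ 2))) x := by
        intro x
        have h1 : HasDerivAt (fun x : ℝ => x ^ (2 * m + 1))
            ((2 * m + 1 : ℝ) * x ^ (2 * m)) x := by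
          simpa using hasDerivAt_pow (2 * m + 1) x
        have h2 : HasDerivAt (fun x : ℝ => Real.exp (-b * x ^ 2))
            (Real.exp (-b * x ^ 2) * (-b * (2 * x))) x := by
          have := (((hasDerivAt_pow 2 x).const_mul (-b)).exp)
          simpa using this
        refine (h1.mul h2).congr_deriv ?_
        rw [pow_succ, pow_succ]
        ring
      have hint : Integrable (fun x : ℝ =>
          ((2 * m + 1 : ℝ)) * (x ^ (2 * m) * Real.exp (-b * x ^ 2))
            - (2 * b) * (x ^ (2 * m + 2) * Real.exp (-b * x ^ 2))) := by
        exact ((myint hb (2 * m)).const_mul _).sub ((myint hb (2 * m + 2)).const_mul _)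
      have hzero := integral_of_hasDerivAt_of_tendsto hderiv hint
        (mytend_bot hb (2 * m + 1)) (mytend_top hb (2 * m + 1))
      rw [sub_zero] at hzero
      rw [integral_sub ((myint hb (2 * m)).const_mul _) ((myint hb (2 * m + 2)).const_mul _),
        MeasureTheory.integral_const_mul, MeasureTheory.integral_const_mul, ih, sub_eq_zero] at hzero
      have h2m2 : 2 * (m + 1) = 2 * m + 2 := by ring
      rw [h2m2]
      have hb2 : ((2 * b) ^ (m + 1)) ≠ 0 := by positivity
      have hbne : (2 * b) ≠ 0 := by positivity
      have : ∫ x : ℝ, x ^ (2 * m + 2) * Real.exp (-b * x ^ 2)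
          = (2 * m + 1 : ℝ) * (Real.sqrt (π / b) * ((2 * m - 1).doubleFactorial : ℝ)
              / (2 * b) ^ m) / (2 * b) := by
        field_simp at hzero ⊢
        linarith [hzero]
      rw [this]
      have hd : 2 * m + 2 - 1 = 2 * m + 1 := by omega
      rw [hd, dfac_step m]
      field_simp
      ring

/-- The centered Gaussian density with standard deviation `σ`. -/
noncomputable def pG (σ x : ℝ) : ℝ :=
  (1 / (Real.sqrt (2 * Real.pi) * σ)) * Real.exp (-x ^ 2 / (2 * σ ^ 2))

lemma pG_int {σ : ℝ} (hσ : 0 < σ) {c : ℝ} (hc : 0 ≤ c) (m : ℕ) :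
    ∫ x : ℝ, pG σ x * x ^ (2 * m) * Real.exp (-c * x ^ 2)
      = ((2 * m - 1).doubleFactorial : ℝ) * (σ ^ 2 / (1 + 2 * c * σ ^ 2)) ^ m
          / Real.sqrt (1 + 2 * c * σ ^ 2) := by
  set A : ℝ := 1 + 2 * c * σ ^ 2 with hA
  have hApos : 0 < A := by positivity
  set b : ℝ := A / (2 * σ ^ 2) with hb
  have hbpos : 0 < b := by positivity
  have heq : ∀ x : ℝ, pG σ x * x ^ (2 * m) * Real.exp (-c * x ^ 2)
      = (1 / (Real.sqrt (2 * π) * σ)) * (x ^ (2 * m) * Real.exp (-b * x ^ 2)) := by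
    intro x
    rw [pG]
    have : -x ^ 2 / (2 * σ ^ 2) + -c * x ^ 2 = -b * x ^ 2 := by
      rw [hb, hA]; field_simp; ring
    rw [← this, Real.exp_add]
    ring
  rw [integral_congr_ae (ae_of_all _ heq), MeasureTheory.integral_const_mul, mymoment hbpos]
  have hsA : Real.sqrt (π / b) = Real.sqrt (2 * π) * σ / Real.sqrt A := by
    have : π / b = (2 * π) * σ ^ 2 / A := by rw [hb]; field_simp
    rw [this, Real.sqrt_div (by positivity), Real.sqrt_mul (by positivity),
      Real.sqrt_sq hσ.le]
  have h2b : 2 * b = A / σ ^ 2 := by rw [hb]; field_simp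
  rw [hsA, h2b]
  have h1 : Real.sqrt (2 * π) ≠ 0 := by positivity
  have h2 : Real.sqrt A ≠ 0 := by positivity
  have h3 : (A : ℝ) ≠ 0 := ne_of_gt hApos
  have h4 : σ ≠ 0 := ne_of_gt hσ
  rw [div_pow, div_pow]
  field_simp

lemma dfac_pos (n : ℕ) : 0 < n.doubleFactorial := by
  induction n using Nat.strong_induction_on with
  | _ n ih =>
    match n with
    | 0 => simp [Nat.doubleFactorial]
    | 1 => simp [Nat.doubleFactorial]
    | n + 2 =>
        rw [Nat.doubleFactorial_add_two]
        exact Nat.mul_pos (by omega) (ih n (by omega))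

lemma pG_pow_integrable {σ : ℝ} (hσ : 0 < σ) (j : ℕ) :
    Integrable fun x : ℝ => pG σ x * x ^ j := by
  have hb : 0 < 1 / (2 * σ ^ 2) := by positivity
  apply ((myint hb j).const_mul (1 / (Real.sqrt (2 * π) * σ))).congr
  filter_upwards with x
  rw [pG]
  rw [show -(1 / (2 * σ ^ 2)) * x ^ 2 = -x ^ 2 / (2 * σ ^ 2) by ring]
  ring

lemma moment_pG {σ : ℝ} (hσ : 0 < σ) (j : ℕ) :
    ∫ x : ℝ, pG σ x * x ^ (2 * j)
      = ((2 * j - 1).doubleFactorial : ℝ) * σ ^ (2 * j) := by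
  have h := pG_int hσ (le_refl 0) j
  simp only [neg_zero, zero_mul, mul_zero, Real.exp_zero, mul_one, zero_add, add_zero,
    Real.sqrt_one, div_one] at h
  rw [h, ← pow_mul]

theorem stmt5 (σ : ℝ) (hσ : 0 < σ) (k : ℕ) (hk : Even k)
    (ε : ℝ) (hε : 0 < ε) (h : 2 * ε * σ ^ 2 < 1) :
    HasSum
      (fun n : ℕ =>
        (-ε) ^ n / (n.factorial : ℝ) *
          (Nat.doubleFactorial (2 * n + k - 1) : ℝ) * σ ^ (2 * n + k))
      (∫ x : ℝ, pG σ x * x ^ k * Real.exp (-ε * x ^ 2)) ∧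
    (∫ x : ℝ, pG σ x * x ^ k * Real.exp (-ε * x ^ 2)) =
      (Nat.doubleFactorial (k - 1) : ℝ) * σ ^ k *
        (1 + 2 * ε * σ ^ 2) ^ (-((k : ℝ) + 1) / 2) := by
  obtain ⟨m, hm⟩ := hk
  have hk2 : k = 2 * m := by omega
  subst hk2
  set A : ℝ := 1 + 2 * ε * σ ^ 2 with hA
  have hApos : 0 < A := by positivity
  have hsA : Real.sqrt A ≠ 0 := by positivity
  have hAne : A ≠ 0 := ne_of_gt hApos
  have hrpow : A ^ (-(((2 * m : ℕ) : ℝ) + 1) / 2) = (A ^ m)⁻¹ * (Real.sqrt A)⁻¹ := by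
    have h1 : (-(((2 * m : ℕ) : ℝ) + 1) / 2) = (-(m : ℝ)) + (-(1 / 2 : ℝ)) := by
      push_cast; ring
    rw [h1, Real.rpow_add hApos, Real.rpow_neg hApos.le, Real.rpow_natCast,
      Real.rpow_neg hApos.le, ← Real.sqrt_eq_rpow]
  have hpart2 : (∫ x : ℝ, pG σ x * x ^ (2 * m) * Real.exp (-ε * x ^ 2))
      = (Nat.doubleFactorial (2 * m - 1) : ℝ) * σ ^ (2 * m)
          * A ^ (-(((2 * m : ℕ) : ℝ) + 1) / 2) := by
    rw [pG_int hσ hε.le m, hrpow, div_pow, ← pow_mul]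
    field_simp
    rw [hA]
  refine ⟨?_, hpart2⟩
  set F : ℕ → ℝ → ℝ := fun n x => (-ε) ^ n / (n.factorial : ℝ) * (pG σ x * x ^ (2 * (n + m)))
    with hF
  have hFint : ∀ n, Integrable (F n) := fun n =>
    (pG_pow_integrable hσ (2 * (n + m))).const_mul _
  have hpGnn : ∀ x : ℝ, 0 ≤ pG σ x := by
    intro x
    rw [pG]
    positivity
  have hnorm : ∀ n x, ‖F n x‖
      = ε ^ n / (n.factorial : ℝ) * (pG σ x * x ^ (2 * (n + m))) := by
    intro n x
    have hxp : (0:ℝ) ≤ x ^ (2 * (n + m)) := by rw [pow_mul]; positivity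
    rw [hF, Real.norm_eq_abs, abs_mul, abs_div, abs_pow, abs_neg, abs_of_pos hε,
      abs_of_nonneg (mul_nonneg (hpGnn x) hxp), Nat.abs_cast]
  have hnormint : ∀ n, (∫ x : ℝ, ‖F n x‖)
      = ε ^ n / (n.factorial : ℝ)
        * (((2 * (n + m) - 1).doubleFactorial : ℝ) * σ ^ (2 * (n + m))) := by
    intro n
    rw [integral_congr_ae (ae_of_all _ (hnorm n)), MeasureTheory.integral_const_mul,
      moment_pG hσ (n + m)]
  have hapos : ∀ n, 0 < ε ^ n / (n.factorial : ℝ)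
      * (((2 * (n + m) - 1).doubleFactorial : ℝ) * σ ^ (2 * (n + m))) := by
    intro n
    have h1 : (0:ℝ) < (n.factorial : ℝ) := by exact_mod_cast n.factorial_pos
    have h2 : (0:ℝ) < ((2 * (n + m) - 1).doubleFactorial : ℝ) := by
      exact_mod_cast dfac_pos _
    positivity
  have hsum : Summable fun n => (∫ x : ℝ, ‖F n x‖) := by
    apply Summable.congr _ (fun n => (hnormint n).symm)
    apply summable_of_ratio_test_tendsto_lt_one h
      (Filter.Eventually.of_forall fun n => ne_of_gt (hapos n))
    have hratio : ∀ n : ℕ, ‖ε ^ (n+1) / ((n+1).factorial : ℝ)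
          * (((2 * ((n+1) + m) - 1).doubleFactorial : ℝ) * σ ^ (2 * ((n+1) + m)))‖
        / ‖ε ^ n / (n.factorial : ℝ)
          * (((2 * (n + m) - 1).doubleFactorial : ℝ) * σ ^ (2 * (n + m)))‖
        = 2 * ε * σ ^ 2 + ε * σ ^ 2 * (2 * (m:ℝ) - 1) * (1 / ((n:ℝ) + 1)) := by
      intro n
      rw [Real.norm_eq_abs, Real.norm_eq_abs, abs_of_pos (hapos (n+1)), abs_of_pos (hapos n)]
      have hd : 2 * ((n+1) + m) - 1 = 2 * (n + m) + 1 := by omega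
      have hd2 : 2 * ((n+1) + m) = 2 * (n + m) + 2 := by omega
      rw [hd, hd2, dfac_step (n + m)]
      have h1 : (0:ℝ) < (n.factorial : ℝ) := by exact_mod_cast n.factorial_pos
      have h2 : ((2 * (n + m) - 1).doubleFactorial : ℝ) ≠ 0 := by
        exact_mod_cast (dfac_pos _).ne'
      have h3 : ((n+1).factorial : ℝ) = ((n:ℝ) + 1) * (n.factorial : ℝ) := by
        rw [Nat.factorial_succ]; push_cast; ring
      rw [h3]
      have hn1 : ((n:ℝ) + 1) ≠ 0 := by positivity
      field_simp
      push_cast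
      ring
    rw [funext hratio]
    have hlim : Filter.Tendsto
        (fun n : ℕ => 2 * ε * σ ^ 2 + ε * σ ^ 2 * (2 * (m:ℝ) - 1) * (1 / ((n:ℝ) + 1)))
        Filter.atTop (nhds (2 * ε * σ ^ 2 + ε * σ ^ 2 * (2 * (m:ℝ) - 1) * 0)) :=
      (tendsto_const_nhds.mul tendsto_one_div_add_atTop_nhds_zero_nat).const_add _
    simpa using hlim
  have key := hasSum_integral_of_summable_integral_norm hFint hsum
  have htsum : ∀ x : ℝ, (∑' n, F n x) = pG σ x * x ^ (2 * m) * Real.exp (-ε * x ^ 2) := by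
    intro x
    have h1 : HasSum (fun n : ℕ => (-ε * x ^ 2) ^ n / (n.factorial : ℝ))
        (Real.exp (-ε * x ^ 2)) := by
      rw [Real.exp_eq_exp_ℝ]
      exact NormedSpace.expSeries_div_hasSum_exp _
    have h2 := h1.mul_left (pG σ x * x ^ (2 * m))
    have h3 : (fun n : ℕ => pG σ x * x ^ (2 * m) * ((-ε * x ^ 2) ^ n / (n.factorial : ℝ)))
        = fun n => F n x := by
      funext n
      rw [hF, mul_pow, ← pow_mul]
      ring
    exact (h3 ▸ h2).tsum_eq
  rw [integral_congr_ae (ae_of_all _ htsum)] at key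
  have hterm : (fun n : ℕ => ∫ x : ℝ, F n x)
      = fun n : ℕ => (-ε) ^ n / (n.factorial : ℝ)
          * ((2 * n + 2 * m - 1).doubleFactorial : ℝ) * σ ^ (2 * n + 2 * m) := by
    funext n
    rw [hF]
    rw [MeasureTheory.integral_const_mul, moment_pG hσ (n + m)]
    have h5 : 2 * (n + m) - 1 = 2 * n + 2 * m - 1 := by omega
    have h6 : 2 * (n + m) = 2 * n + 2 * m := by ring
    rw [h5, h6, mul_assoc]
  rw [hterm] at key
  exact key
end

section
/- (Second-order moment expansion for the asymmetric density, eqs. 45–47) Let σ > 0, let q be an odd integer with q ≥ 3, let p be an even integer with p > q, fix a ∈ ℝ and b > 0, and let k be an even nonnegative integer. Then, as t → 0 from the right, ∫_ℝ p_G(x) x^k exp(t a x^q − t b x^p) dx = (k−1)!! σ^k − t b (p+k−1)!! σ^{p+k} + t² ((a²/2)(2q+k−1)!! σ^{2q+k} + (b²/2)(2p+k−1)!! σ^{2p+k}) + O(t³). -/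
open MeasureTheory Real Filter Topology Asymptotics

lemma integrable_pow_gauss {b : ℝ} (hb : 0 < b) (m : ℕ) :
    Integrable (fun x : ℝ => x ^ m * Real.exp (-b * x ^ 2)) := by
  have h := integrable_rpow_mul_exp_neg_mul_sq hb (s := (m : ℝ))
    (lt_of_lt_of_le neg_one_lt_zero (Nat.cast_nonneg m))
  refine h.congr (Filter.Eventually.of_forall fun x => ?_)
  simp only [Real.rpow_natCast]

lemma pG_eq (σ : ℝ) (x : ℝ) :
    pG σ x = (1 / (Real.sqrt (2 * Real.pi) * σ)) * Real.exp (-(1/(2*σ^2)) * x ^ 2) := by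
  rw [pG]; ring_nf

lemma integrable_pG_pow (σ : ℝ) (hσ : 0 < σ) (m : ℕ) :
    Integrable (fun x : ℝ => pG σ x * x ^ m) := by
  have h := (integrable_pow_gauss (b := 1/(2*σ^2)) (by positivity) m).const_mul
    (1 / (Real.sqrt (2 * Real.pi) * σ))
  refine h.congr (Filter.Eventually.of_forall fun x => ?_)
  simp only [pG_eq]; ring

lemma pG_pos (σ : ℝ) (hσ : 0 < σ) (x : ℝ) : 0 < pG σ x := by
  have : (0:ℝ) < Real.sqrt (2 * Real.pi) := Real.sqrt_pos.mpr (by positivity)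
  unfold pG; positivity

lemma continuous_pG (σ : ℝ) : Continuous (pG σ) := by
  unfold pG; fun_prop

lemma integral_pG (σ : ℝ) (hσ : 0 < σ) : ∫ x : ℝ, pG σ x = 1 := by
  have h : ∫ x : ℝ, Real.exp (-(1/(2*σ^2)) * x ^ 2) = Real.sqrt (Real.pi / (1/(2*σ^2))) :=
    integral_gaussian _
  have h0 : ∫ x : ℝ, pG σ x
      = (1 / (Real.sqrt (2 * Real.pi) * σ)) * ∫ x : ℝ, Real.exp (-(1/(2*σ^2)) * x ^ 2) := by
    rw [← integral_const_mul]
    congr 1; funext x; rw [pG_eq]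
  rw [h0, h]
  have h2 : Real.pi / (1/(2*σ^2)) = (Real.sqrt (2 * Real.pi) * σ)^2 := by
    rw [mul_pow, Real.sq_sqrt (by positivity)]; field_simp
  rw [h2, Real.sqrt_sq (by positivity)]
  have : (0:ℝ) < Real.sqrt (2 * Real.pi) := Real.sqrt_pos.mpr (by positivity)
  field_simp

lemma hasDerivAt_pG (σ : ℝ) (hσ : 0 < σ) (x : ℝ) :
    HasDerivAt (pG σ) (pG σ x * (-x / σ^2)) x := by
  have h1 : HasDerivAt (fun x : ℝ => -x ^ 2 / (2 * σ ^ 2)) (-(2*x) / (2*σ^2)) x := by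
    simpa using ((hasDerivAt_pow 2 x).neg.div_const (2*σ^2))
  have h2 := (h1.exp).const_mul (1 / (Real.sqrt (2 * Real.pi) * σ))
  have hx : (1 / (Real.sqrt (2 * Real.pi) * σ)) * (Real.exp (-x ^ 2 / (2 * σ ^ 2)) * (-(2*x) / (2*σ^2)))
      = pG σ x * (-x / σ^2) := by
    rw [pG]; field_simp
  rw [hx] at h2
  exact h2.congr_deriv rfl |>.congr_of_eventuallyEq (Filter.Eventually.of_forall fun y => by rw [pG])

lemma moment_rec (σ : ℝ) (hσ : 0 < σ) (m : ℕ) :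
    ∫ x : ℝ, pG σ x * x ^ (m + 2)
      = σ^2 * (m + 1 : ℝ) * ∫ x : ℝ, pG σ x * x ^ m := by
  set F' : ℝ → ℝ := fun x => (m + 1 : ℝ) * (pG σ x * x ^ m) - (1/σ^2) * (pG σ x * x ^ (m+2))
    with hF'
  have hderiv : ∀ x : ℝ, HasDerivAt (fun x => pG σ x * x ^ (m+1)) (F' x) x := by
    intro x
    have h := (hasDerivAt_pG σ hσ x).mul (hasDerivAt_pow (m+1) x)
    refine h.congr_deriv ?_
    rw [hF']; push_cast
    field_simp
    ring
  have hint' : Integrable F' := ((integrable_pG_pow σ hσ m).const_mul _).sub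
    ((integrable_pG_pow σ hσ (m+2)).const_mul _)
  have hzero : ∫ x : ℝ, F' x = 0 :=
    integral_eq_zero_of_hasDerivAt_of_integrable hderiv hint' (integrable_pG_pow σ hσ (m+1))
  rw [hF'] at hzero
  rw [integral_sub ((integrable_pG_pow σ hσ m).const_mul _)
    ((integrable_pG_pow σ hσ (m+2)).const_mul _), MeasureTheory.integral_const_mul, MeasureTheory.integral_const_mul] at hzero
  have hσ2 : (σ:ℝ)^2 ≠ 0 := by positivity
  have := sub_eq_zero.mp hzero
  field_simp at this ⊢
  linarith [this]

lemma moment_even (σ : ℝ) (hσ : 0 < σ) (n : ℕ) :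
    ∫ x : ℝ, pG σ x * x ^ (2*n) = σ^(2*n) * (Nat.doubleFactorial (2*n - 1) : ℝ) := by
  induction n with
  | zero => simpa [Nat.doubleFactorial] using integral_pG σ hσ
  | succ n ih =>
    have h2 : 2*(n+1) = 2*n + 2 := by ring
    rw [h2, moment_rec σ hσ, ih]
    have h3 : 2*(n+1) - 1 = (2*n - 1) + 2 ∨ n = 0 := by
      rcases n with _ | n
      · right; rfl
      · left; omega
    rcases h3 with h3 | h3
    · have h5 : 2*n + 2 - 1 = (2*n - 1) + 2 := by omega
      rw [h5, Nat.doubleFactorial]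
      have h4 : (2*n - 1) + 2 = 2*n + 1 := by omega
      push_cast [h4]
      rw [pow_add]
      ring
    · subst h3; norm_num [Nat.doubleFactorial]

lemma pG_even (σ : ℝ) (x : ℝ) : pG σ (-x) = pG σ x := by
  rw [pG, pG, neg_sq]

lemma moment_odd (σ : ℝ) {m : ℕ} (hm : Odd m) :
    ∫ x : ℝ, pG σ x * x ^ m = 0 := by
  have h := MeasureTheory.integral_neg_eq_self (fun x : ℝ => pG σ x * x ^ m) volume
  have h2 : ∀ x : ℝ, pG σ (-x) * (-x) ^ m = -(pG σ x * x ^ m) := by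
    intro x; rw [pG_even, hm.neg_pow]; ring
  simp only [h2] at h
  rw [integral_neg] at h
  linarith

lemma moment_of_even (σ : ℝ) (hσ : 0 < σ) {m : ℕ} (hm : Even m) :
    ∫ x : ℝ, pG σ x * x ^ m = σ^m * (Nat.doubleFactorial (m - 1) : ℝ) := by
  obtain ⟨n, rfl⟩ := hm
  have : n + n = 2 * n := by ring
  rw [this, moment_even σ hσ]

lemma poly_bound {A b : ℝ} (hA : 0 < A) (hb : 0 < b) {q p : ℕ} (hqp : q < p)
    {y : ℝ} (hy : 0 ≤ y) :
    A * y^q ≤ (b/2) * y^p + A*(1 + (2*A/b)^q) := by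
  have hpow : y ^ (p - q) * y ^ q = y ^ p := by rw [← pow_add]; congr 1; omega
  have hq0 : (0:ℝ) ≤ y ^ q := pow_nonneg hy q
  rcases le_or_gt A ((b/2) * y^(p-q)) with h | h
  · have h1 : A * y ^ q ≤ ((b/2) * y^(p-q)) * y ^ q := mul_le_mul_of_nonneg_right h hq0
    have h2 : ((b/2) * y^(p-q)) * y ^ q = (b/2) * y ^ p := by rw [mul_assoc, hpow]
    nlinarith [pow_nonneg (le_of_lt (by positivity : (0:ℝ) < 2*A/b)) q]
  · have hy2 : y^(p-q) < 2*A/b := by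
      rw [lt_div_iff₀ hb]; nlinarith
    have hyp : (0:ℝ) ≤ (b/2) * y ^ p := by positivity
    rcases le_or_gt y 1 with h1 | h1
    · have : y ^ q ≤ 1 := pow_le_one₀ hy h1
      nlinarith [pow_nonneg (le_of_lt (by positivity : (0:ℝ) < 2*A/b)) q]
    · have hle : y ≤ y ^ (p - q) := le_self_pow₀ h1.le (by omega)
      have h2 : y ^ q ≤ (y ^ (p-q)) ^ q := pow_le_pow_left₀ hy hle q
      have h3 : (y ^ (p-q)) ^ q ≤ (2*A/b) ^ q :=
        pow_le_pow_left₀ (pow_nonneg hy _) hy2.le q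
      nlinarith

lemma exp_taylor_bound {D u : ℝ} (hD : 0 ≤ D) (hu : u ≤ D) :
    |Real.exp u - (1 + u + u^2/2)| ≤ (3 + Real.exp D) * |u|^3 := by
  have hED : (1:ℝ) ≤ Real.exp D := by
    rw [← Real.exp_zero]; exact Real.exp_le_exp.mpr hD
  rcases le_or_gt |u| 1 with h | h
  · have hbd := Real.exp_bound h (n := 3) (by norm_num)
    have hsum : ∑ m ∈ Finset.range 3, u ^ m / (m.factorial : ℝ) = 1 + u + u^2/2 := by
      simp [Finset.sum_range_succ, Nat.factorial]
    rw [hsum] at hbd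
    have : |u|^3 * ((3:ℕ).succ / ((3:ℕ).factorial * (3:ℕ))) ≤ (3 + Real.exp D) * |u|^3 := by
      have h3 : (0:ℝ) ≤ |u|^3 := by positivity
      have : ((3:ℕ).succ / ((3:ℕ).factorial * (3:ℕ)) : ℝ) = 4/18 := by norm_num [Nat.factorial]
      nlinarith
    linarith
  · have hu3 : (1:ℝ) ≤ |u|^3 := one_le_pow₀ h.le
    have hu1 : |u| ≤ |u|^3 := by
      simpa using pow_le_pow_right₀ h.le (by norm_num : 1 ≤ 3)
    have hu2 : u^2 ≤ |u|^3 := by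
      rw [← sq_abs]
      exact pow_le_pow_right₀ h.le (by norm_num)
    have heu : Real.exp u ≤ Real.exp D := Real.exp_le_exp.mpr hu
    have htri : |Real.exp u - (1 + u + u^2/2)| ≤ Real.exp u + (1 + |u| + u^2/2) := by
      have h1 : |(1 + u + u^2/2)| ≤ 1 + |u| + u^2/2 := by
        calc |(1 + u + u^2/2)| ≤ |1 + u| + |u^2/2| := abs_add_le _ _
        _ ≤ 1 + |u| + u^2/2 := by
            rw [abs_div, abs_of_nonneg (sq_nonneg u)]
            have := abs_add_le (1:ℝ) u
            simp at this ⊢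
            linarith
      calc |Real.exp u - (1 + u + u^2/2)| ≤ |Real.exp u| + |(1 + u + u^2/2)| := abs_sub _ _
      _ ≤ Real.exp u + (1 + |u| + u^2/2) := by
          rw [abs_of_pos (Real.exp_pos u)]; linarith
    have : Real.exp u + (1 + |u| + u^2/2) ≤ (3 + Real.exp D) * |u|^3 := by nlinarith
    linarith

lemma integrable_pG_abs_pow (σ : ℝ) (hσ : 0 < σ) (m : ℕ) :
    Integrable (fun x : ℝ => pG σ x * |x| ^ m) := by
  refine Integrable.mono' ((integrable_pG_pow σ hσ 0).add (integrable_pG_pow σ hσ (2*m)))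
    (Continuous.aestronglyMeasurable (by exact (continuous_pG σ).mul (continuous_abs.pow m)))
    (Filter.Eventually.of_forall fun x => ?_)
  have h1 : (0:ℝ) < pG σ x := pG_pos σ hσ x
  have h2 : |x| ^ m ≤ 1 + x ^ (2*m) := by
    rcases le_or_gt (|x|) 1 with h | h
    · have h5 := pow_le_one₀ (abs_nonneg x) h (n := m)
      have h4 : (0:ℝ) ≤ x^(2*m) := by rw [pow_mul]; positivity
      linarith
    · have : |x| ^ m ≤ |x| ^ (2*m) := pow_le_pow_right₀ h.le (by omega)
      rw [(even_two_mul m).pow_abs] at this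
      linarith
  have h3 : ‖pG σ x * |x| ^ m‖ = pG σ x * |x| ^ m := by
    rw [Real.norm_eq_abs, abs_of_nonneg (by positivity)]
  rw [h3]
  have : pG σ x * |x| ^ m ≤ pG σ x * (1 + x ^ (2*m)) :=
    mul_le_mul_of_nonneg_left h2 h1.le
  simpa [mul_add] using this

lemma cube_add_le {y z : ℝ} (hy : 0 ≤ y) (hz : 0 ≤ z) :
    (y + z)^3 ≤ 4*(y^3 + z^3) := by nlinarith [sq_nonneg (y - z), mul_nonneg hy hz]

set_option maxHeartbeats 1000000 in
theorem stmt16 (σ : ℝ) (hσ : 0 < σ)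
    (q : ℕ) (hq : 3 ≤ q) (hqo : Odd q)
    (p : ℕ) (hpe : Even p) (hqp : q < p)
    (a : ℝ) (b : ℝ) (hb : 0 < b)
    (k : ℕ) (hk : Even k) :
    (fun t : ℝ =>
        (∫ x : ℝ, pG σ x * x ^ k * Real.exp (t * a * x ^ q - t * b * x ^ p)) -
          ((Nat.doubleFactorial (k - 1) : ℝ) * σ ^ k -
            t * b * (Nat.doubleFactorial (p + k - 1) : ℝ) * σ ^ (p + k) +
            t ^ 2 * (a ^ 2 / 2 * (Nat.doubleFactorial (2 * q + k - 1) : ℝ) * σ ^ (2 * q + k) +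
              b ^ 2 / 2 * (Nat.doubleFactorial (2 * p + k - 1) : ℝ) * σ ^ (2 * p + k))))
      =O[𝓝[>] (0 : ℝ)] fun t => t ^ 3 := by
  rw [Asymptotics.isBigO_iff]
  set A : ℝ := |a| + 1 with hAdef
  have hA0 : (0:ℝ) < A := by positivity
  set D : ℝ := A * (1 + (2*A/b)^q) with hDdef
  have hD0 : (0:ℝ) ≤ D := by positivity
  set J : ℝ := ∫ x : ℝ, (pG σ x * |x|^(3*q+k) + pG σ x * |x|^(3*p+k)) with hJdef
  refine ⟨(3 + Real.exp D) * (8*(|a|+b)^3) * J, ?_⟩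
  filter_upwards [Ioc_mem_nhdsGT_of_mem
    (show (0:ℝ) ∈ Set.Ico (0:ℝ) 1 by constructor <;> norm_num)] with t ht
  obtain ⟨ht0, ht1⟩ := ht
  -- uniform upper bound on the exponent
  have hu_le : ∀ x : ℝ, t * a * x ^ q - t * b * x ^ p ≤ D := by
    intro x
    have h3 : |x|^p = x^p := hpe.pow_abs x
    have hxp : (0:ℝ) ≤ x^p := by rw [← h3]; positivity
    have h1 : a * x^q ≤ A * |x|^q := by
      calc a * x^q ≤ |a * x^q| := le_abs_self _
      _ = |a| * |x|^q := by rw [abs_mul, abs_pow]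
      _ ≤ A * |x|^q := by
          have := pow_nonneg (abs_nonneg x) q
          nlinarith
    have h2 : A * |x|^q ≤ (b/2) * |x|^p + D := poly_bound hA0 hb hqp (abs_nonneg x)
    rw [h3] at h2
    have h4 : a * x^q ≤ (b/2)*x^p + D := le_trans h1 h2
    nlinarith [mul_le_mul_of_nonneg_left h4 ht0.le, mul_nonneg ht0.le hxp,
      mul_nonneg (sub_nonneg.mpr ht1) hD0]
  have hxk : ∀ x : ℝ, |x|^k = x^k := fun x => hk.pow_abs x
  have hxk0 : ∀ x : ℝ, (0:ℝ) ≤ x^k := fun x => by rw [← hxk]; positivity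
  -- integrability of the integrand
  have hIexp : Integrable (fun x : ℝ =>
      pG σ x * x ^ k * Real.exp (t * a * x ^ q - t * b * x ^ p)) := by
    refine Integrable.mono' ((integrable_pG_abs_pow σ hσ k).const_mul (Real.exp D))
      (Continuous.aestronglyMeasurable
        (((continuous_pG σ).mul (continuous_pow k)).mul (by fun_prop)))
      (Filter.Eventually.of_forall fun x => ?_)
    have h1 : (0:ℝ) < pG σ x := pG_pos σ hσ x
    have h2 : Real.exp (t * a * x ^ q - t * b * x ^ p) ≤ Real.exp D :=
      Real.exp_le_exp.mpr (hu_le x)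
    have hk0 := hxk0 x
    rw [Real.norm_eq_abs, abs_of_nonneg (by positivity)]
    calc pG σ x * x ^ k * Real.exp (t * a * x ^ q - t * b * x ^ p)
        ≤ pG σ x * x ^ k * Real.exp D := by
          apply mul_le_mul_of_nonneg_left h2 (by positivity)
      _ = Real.exp D * (pG σ x * |x| ^ k) := by rw [hxk]; ring
  -- pointwise decomposition
  set f₁ : ℝ → ℝ := fun x => pG σ x * x ^ k *
      (Real.exp (t * a * x ^ q - t * b * x ^ p) -
        (1 + (t * a * x ^ q - t * b * x ^ p) + (t * a * x ^ q - t * b * x ^ p)^2/2)) with hf₁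
  set w : ℝ → ℝ := fun x => pG σ x * x ^ k + ((t*a) * (pG σ x * x^(q+k))
      + ((-(t*b)) * (pG σ x * x^(p+k)) + ((t^2*a^2/2) * (pG σ x * x^(2*q+k))
      + ((-(t^2*a*b)) * (pG σ x * x^(p+q+k)) + (t^2*b^2/2) * (pG σ x * x^(2*p+k)))))) with hw
  have hpt : ∀ x : ℝ, pG σ x * x ^ k * Real.exp (t * a * x ^ q - t * b * x ^ p)
      = f₁ x + w x := by
    intro x
    rw [hf₁, hw]
    ring
  have h1 := integrable_pG_pow σ hσ k
  have h2 := (integrable_pG_pow σ hσ (q+k)).const_mul (t*a)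
  have h3 := (integrable_pG_pow σ hσ (p+k)).const_mul (-(t*b))
  have h4 := (integrable_pG_pow σ hσ (2*q+k)).const_mul (t^2*a^2/2)
  have h5 := (integrable_pG_pow σ hσ (p+q+k)).const_mul (-(t^2*a*b))
  have h6 := (integrable_pG_pow σ hσ (2*p+k)).const_mul (t^2*b^2/2)
  have h56 : Integrable (fun x : ℝ => (-(t^2*a*b)) * (pG σ x * x^(p+q+k))
      + (t^2*b^2/2) * (pG σ x * x^(2*p+k))) := h5.add h6
  have h456 : Integrable (fun x : ℝ => (t^2*a^2/2) * (pG σ x * x^(2*q+k))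
      + ((-(t^2*a*b)) * (pG σ x * x^(p+q+k)) + (t^2*b^2/2) * (pG σ x * x^(2*p+k)))) :=
    h4.add h56
  have h3456 : Integrable (fun x : ℝ => (-(t*b)) * (pG σ x * x^(p+k))
      + ((t^2*a^2/2) * (pG σ x * x^(2*q+k))
      + ((-(t^2*a*b)) * (pG σ x * x^(p+q+k)) + (t^2*b^2/2) * (pG σ x * x^(2*p+k))))) :=
    h3.add h456
  have h23456 : Integrable (fun x : ℝ => (t*a) * (pG σ x * x^(q+k))
      + ((-(t*b)) * (pG σ x * x^(p+k)) + ((t^2*a^2/2) * (pG σ x * x^(2*q+k))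
      + ((-(t^2*a*b)) * (pG σ x * x^(p+q+k)) + (t^2*b^2/2) * (pG σ x * x^(2*p+k)))))) :=
    h2.add h3456
  have hIw : Integrable w := by
    rw [hw]
    exact h1.add h23456
  have hIf₁ : Integrable f₁ := by
    refine (hIexp.sub hIw).congr (Filter.Eventually.of_forall fun x => ?_)
    have := hpt x
    simp only [Pi.sub_apply] at this ⊢
    linarith
  have hsplit : (∫ x : ℝ, pG σ x * x ^ k * Real.exp (t * a * x ^ q - t * b * x ^ p))
      = (∫ x : ℝ, f₁ x) + ∫ x : ℝ, w x := by
    rw [← integral_add hIf₁ hIw]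
    congr 1
    funext x
    exact hpt x
  -- value of ∫ w
  have m1 := moment_of_even σ hσ hk
  have m2 := moment_odd σ (hqo.add_even hk)
  have m3 := moment_of_even σ hσ (hpe.add hk)
  have m4 := moment_of_even σ hσ ((even_two_mul q).add hk)
  have m5 := moment_odd σ ((hpe.add_odd hqo).add_even hk)
  have m6 := moment_of_even σ hσ ((even_two_mul p).add hk)
  have hIntw : ∫ x : ℝ, w x
      = ((Nat.doubleFactorial (k - 1) : ℝ) * σ ^ k -
          t * b * (Nat.doubleFactorial (p + k - 1) : ℝ) * σ ^ (p + k) +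
          t ^ 2 * (a ^ 2 / 2 * (Nat.doubleFactorial (2 * q + k - 1) : ℝ) * σ ^ (2 * q + k) +
            b ^ 2 / 2 * (Nat.doubleFactorial (2 * p + k - 1) : ℝ) * σ ^ (2 * p + k))) := by
    rw [hw]
    rw [integral_add h1 h23456,
      integral_add h2 h3456,
      integral_add h3 h456,
      integral_add h4 h56,
      integral_add h5 h6,
      MeasureTheory.integral_const_mul, MeasureTheory.integral_const_mul,
      MeasureTheory.integral_const_mul, MeasureTheory.integral_const_mul,
      MeasureTheory.integral_const_mul]
    rw [m1, m2, m3, m4, m5, m6]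
    ring
  rw [hsplit, hIntw, add_sub_cancel_right]
  set c : ℝ := (3 + Real.exp D) * (8*(|a|+b)^3) * t^3 with hcdef
  have h3e : (0:ℝ) ≤ 3 + Real.exp D := by positivity
  have hab3 : (0:ℝ) ≤ (|a|+b)^3 := by positivity
  have ht3 : (0:ℝ) ≤ t^3 := by positivity
  have hbound : ‖∫ x : ℝ, f₁ x‖
      ≤ ∫ x : ℝ, c * (pG σ x * |x|^(3*q+k) + pG σ x * |x|^(3*p+k)) := by
    refine MeasureTheory.norm_integral_le_of_norm_le
      (by exact (((integrable_pG_abs_pow σ hσ (3*q+k)).add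
        (integrable_pG_abs_pow σ hσ (3*p+k))).const_mul c))
      (Filter.Eventually.of_forall fun x => ?_)
    have hpg := pG_pos σ hσ x
    have hk0 := hxk0 x
    have hR := exp_taylor_bound hD0 (hu_le x)
    have hxq0 : (0:ℝ) ≤ |x|^q := pow_nonneg (abs_nonneg x) q
    have hxp0 : (0:ℝ) ≤ |x|^p := pow_nonneg (abs_nonneg x) p
    have e1 : ‖f₁ x‖ = pG σ x * |x|^k *
        |Real.exp (t*a*x^q - t*b*x^p) -
          (1 + (t*a*x^q - t*b*x^p) + (t*a*x^q - t*b*x^p)^2/2)| := by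
      rw [hf₁]
      simp only []
      rw [Real.norm_eq_abs, abs_mul, abs_of_nonneg (by positivity : (0:ℝ) ≤ pG σ x * x^k), hxk]
    have hZ : |t*a*x^q - t*b*x^p| ≤ t * ((|a|+b) * (|x|^q + |x|^p)) := by
      have := abs_sub (t*a*x^q) (t*b*x^p)
      have e2 : |t*a*x^q| = t * (|a| * |x|^q) := by
        rw [abs_mul, abs_mul, abs_of_pos ht0, abs_pow]; ring
      have e3 : |t*b*x^p| = t * (b * |x|^p) := by
        rw [abs_mul, abs_mul, abs_of_pos ht0, abs_of_pos hb, abs_pow]; ring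
      have hba : (0:ℝ) ≤ |a| := abs_nonneg a
      nlinarith [mul_nonneg (mul_nonneg ht0.le hba) hxp0,
        mul_nonneg (mul_nonneg ht0.le hb.le) hxq0]
    have hZ3 : |t*a*x^q - t*b*x^p|^3 ≤ (t * ((|a|+b) * (|x|^q + |x|^p)))^3 :=
      pow_le_pow_left₀ (abs_nonneg _) hZ 3
    have hcube : (|x|^q + |x|^p)^3 ≤ 4 * (|x|^(3*q) + |x|^(3*p)) := by
      have h := cube_add_le hxq0 hxp0
      rw [← pow_mul, ← pow_mul, mul_comm q 3, mul_comm p 3] at h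
      linarith
    have hu3 : |t*a*x^q - t*b*x^p|^3
        ≤ t^3 * ((|a|+b)^3 * (4 * (|x|^(3*q) + |x|^(3*p)))) := by
      calc |t*a*x^q - t*b*x^p|^3 ≤ (t * ((|a|+b) * (|x|^q + |x|^p)))^3 := hZ3
      _ = t^3 * ((|a|+b)^3 * (|x|^q+|x|^p)^3) := by ring
      _ ≤ t^3 * ((|a|+b)^3 * (4 * (|x|^(3*q) + |x|^(3*p)))) := by
          exact mul_le_mul_of_nonneg_left
            (mul_le_mul_of_nonneg_left hcube hab3) ht3
    have habs3 : (0:ℝ) ≤ |t*a*x^q - t*b*x^p|^3 := by positivity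
    calc ‖f₁ x‖ = pG σ x * |x|^k *
        |Real.exp (t*a*x^q - t*b*x^p) -
          (1 + (t*a*x^q - t*b*x^p) + (t*a*x^q - t*b*x^p)^2/2)| := e1
    _ ≤ pG σ x * |x|^k * ((3 + Real.exp D) * |t*a*x^q - t*b*x^p|^3) := by
        refine mul_le_mul_of_nonneg_left ?_ (by positivity)
        convert hR using 3 <;> ring
    _ ≤ pG σ x * |x|^k * ((3 + Real.exp D)
          * (t^3 * ((|a|+b)^3 * (4 * (|x|^(3*q) + |x|^(3*p)))))) := by
        exact mul_le_mul_of_nonneg_left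
          (mul_le_mul_of_nonneg_left hu3 h3e) (by positivity)
    _ ≤ c * (pG σ x * |x|^(3*q+k) + pG σ x * |x|^(3*p+k)) := by
        rw [hcdef, pow_add, pow_add]
        have base : (0:ℝ) ≤ pG σ x * |x|^k * (|x|^(3*q) + |x|^(3*p)) := by positivity
        nlinarith [mul_nonneg (mul_nonneg (mul_nonneg h3e ht3) hab3) base]
  have hInt2 : ∫ x : ℝ, c * (pG σ x * |x|^(3*q+k) + pG σ x * |x|^(3*p+k)) = c * J := by
    rw [MeasureTheory.integral_const_mul, ← hJdef]
  have hnt : ‖t^3‖ = t^3 := by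
    rw [Real.norm_eq_abs, abs_of_pos (by positivity)]
  rw [hnt]
  calc ‖∫ x : ℝ, f₁ x‖ ≤ c * J := by rw [← hInt2]; exact hbound
  _ = (3 + Real.exp D) * (8*(|a|+b)^3) * J * t^3 := by rw [hcdef]; ring
end
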